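/- For every real k with 0 < k² < 1, letting k' = sqrt(1-k²), the integral ∫₀^{π/2} x·sin(x)·cos(x)/sqrt(1 - k²·sin²x) dx equals -π·k'/(2k²) + E(k)/k². -/

import Mathlib

open Real

theorem stmt_19 (k : ℝ) (hk0 : 0 < k ^ 2) (hk1 : k ^ 2 < 1) :
    ∫ x in (0:ℝ)..(Real.pi / 2),
        x * Real.sin x * Real.cos x / Real.sqrt (1 - k ^ 2 * Real.sin x ^ 2) =
      -(Real.pi * Real.sqrt (1 - k ^ 2)) / (2 * k ^ 2) +
        (∫ t in (0:ℝ)..(Real.pi / 2), Real.sqrt (1 - k ^ 2 * Real.sin t ^ 2)) / k ^ 2 := by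
  have hpos : ∀ x : ℝ, 0 < 1 - k ^ 2 * Real.sin x ^ 2 := by
    intro x
    nlinarith [Real.sin_sq_le_one x, sq_nonneg (Real.sin x)]
  set v : ℝ → ℝ := fun x => -Real.sqrt (1 - k ^ 2 * Real.sin x ^ 2) / k ^ 2 with hv
  set v' : ℝ → ℝ := fun x => Real.sin x * Real.cos x / Real.sqrt (1 - k ^ 2 * Real.sin x ^ 2)
    with hv'
  have hderiv : ∀ x : ℝ, HasDerivAt v (v' x) x := by
    intro x
    have hg : HasDerivAt (fun x => 1 - k ^ 2 * Real.sin x ^ 2)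
        (-(k ^ 2 * (2 * Real.sin x * Real.cos x))) x := by
      have hs : HasDerivAt (fun x => Real.sin x ^ 2) (2 * Real.sin x * Real.cos x) x := by
        have := (Real.hasDerivAt_sin x).fun_pow 2
        simpa [mul_comm, mul_assoc, mul_left_comm] using this
      simpa using ((hs.const_mul (k ^ 2)).const_sub 1)
    have hsq := (Real.hasDerivAt_sqrt (hpos x).ne').comp x hg
    have := (hsq.neg).div_const (k ^ 2)
    have this2 : HasDerivAt v (-(1 / (2 * √(1 - k ^ 2 * sin x ^ 2)) * -(k ^ 2 * (2 * sin x * cos x))) / k ^ 2) x := this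
    convert this2 using 1
    have hsqrtpos : 0 < Real.sqrt (1 - k ^ 2 * Real.sin x ^ 2) := Real.sqrt_pos.2 (hpos x)
    have hk : k ≠ 0 := by rintro rfl; simp at hk0
    simp only [hv']
    field_simp
  have hcontD : Continuous v' := by
    apply Continuous.div
    · exact (Real.continuous_sin.mul Real.continuous_cos)
    · exact (continuous_const.sub (continuous_const.mul (Real.continuous_sin.pow 2))).sqrt
    · intro x
      exact (Real.sqrt_pos.2 (hpos x)).ne'
  have hcontV : Continuous v := by
    apply Continuous.div_const
    exact (continuous_const.sub (continuous_const.mul (Real.continuous_sin.pow 2))).sqrt.neg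
  have key := intervalIntegral.integral_mul_deriv_eq_deriv_mul
    (u := fun x : ℝ => x) (u' := fun _ => (1:ℝ)) (v := v) (v' := v')
    (a := (0:ℝ)) (b := Real.pi / 2)
    (fun x _ => hasDerivAt_id x) (fun x _ => hderiv x)
    (intervalIntegrable_const) (hcontD.intervalIntegrable _ _)
  have hint : (∫ x in (0:ℝ)..(Real.pi / 2),
      x * Real.sin x * Real.cos x / Real.sqrt (1 - k ^ 2 * Real.sin x ^ 2)) =
      ∫ x in (0:ℝ)..(Real.pi / 2), x * v' x := by
    congr 1
    funext x
    simp [hv', mul_div_assoc, mul_assoc]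
  rw [hint, key]
  have h0 : Real.sin (0:ℝ) = 0 := Real.sin_zero
  have hpi2 : Real.sin (Real.pi / 2) = 1 := Real.sin_pi_div_two
  have hint2 : (∫ x in (0:ℝ)..(Real.pi / 2), (1:ℝ) * v x) =
      -(∫ t in (0:ℝ)..(Real.pi / 2), Real.sqrt (1 - k ^ 2 * Real.sin t ^ 2)) / k ^ 2 := by
    simp only [one_mul, hv]
    rw [intervalIntegral.integral_div, intervalIntegral.integral_neg]
  rw [hint2]
  simp only [hv, h0, hpi2]
  norm_num
  ring
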